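/- Let (Ω, μ) be a finite probability space, Y : Ω → {0,1}, f : Ω → [0,1] with finite range R(f), and h : Ω → ℝ with h(ω)² ≤ B for all ω. Suppose Σ_{v ∈ R(f)} Pr[f=v] · (E[h·(Y - v) | f = v])² ≤ α and Σ_{v ∈ R(f)} Pr[f=v] · (E[Y - v | f = v])² ≤ α. Then Σ_{v ∈ R(f)} Pr[f=v] · |E[(h - h̄_v)(Y - ȳ_v) | f = v]| ≤ √α·(1 + √B), where h̄_v = E[h | f = v] and ȳ_v = E[Y | f = v]. -/

import Mathlib

open scoped Classical
open Finset

variable {Ω : Type*}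

/-- Probability of an event `S` under weight function `μ` on a finite space. -/
noncomputable def prEv [Fintype Ω] (μ : Ω → ℝ) (S : Set Ω) : ℝ :=
  ∑ ω : Ω, if ω ∈ S then μ ω else 0

/-- Conditional expectation of `g` given the event `S`. -/
noncomputable def cexp [Fintype Ω] (μ : Ω → ℝ) (S : Set Ω) (g : Ω → ℝ) : ℝ :=
  (∑ ω : Ω, if ω ∈ S then μ ω * g ω else 0) / prEv μ S

/-- (Unconditional) expectation of `g`. -/
noncomputable def exv [Fintype Ω] (μ : Ω → ℝ) (g : Ω → ℝ) : ℝ :=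
  ∑ ω : Ω, μ ω * g ω

/-- Cauchy–Schwarz step: weighted ℓ¹ norm bounded by square root of weighted ℓ². -/
lemma cs_aux {ι : Type*} (s : Finset ι) (p A : ι → ℝ) (α : ℝ) (hα : 0 ≤ α)
    (hp : ∀ i ∈ s, 0 ≤ p i) (hps : ∑ i ∈ s, p i ≤ 1)
    (hA : ∑ i ∈ s, p i * (A i) ^ 2 ≤ α) :
    ∑ i ∈ s, p i * |A i| ≤ Real.sqrt α := by
  have hnn : 0 ≤ ∑ i ∈ s, p i * |A i| :=
    Finset.sum_nonneg fun i hi => mul_nonneg (hp i hi) (abs_nonneg _)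
  rw [Real.le_sqrt hnn hα]
  calc (∑ i ∈ s, p i * |A i|) ^ 2
      = (∑ i ∈ s, Real.sqrt (p i) * (Real.sqrt (p i) * |A i|)) ^ 2 := by
        congr 1; refine Finset.sum_congr rfl fun i hi => ?_
        rw [← mul_assoc, Real.mul_self_sqrt (hp i hi)]
    _ ≤ (∑ i ∈ s, Real.sqrt (p i) ^ 2) * ∑ i ∈ s, (Real.sqrt (p i) * |A i|) ^ 2 :=
        sum_mul_sq_le_sq_mul_sq s _ _
    _ = (∑ i ∈ s, p i) * ∑ i ∈ s, p i * (A i) ^ 2 := by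
        congr 1
        · exact Finset.sum_congr rfl fun i hi => Real.sq_sqrt (hp i hi)
        · refine Finset.sum_congr rfl fun i hi => ?_
          rw [mul_pow, Real.sq_sqrt (hp i hi), sq_abs]
    _ ≤ 1 * α := by
        refine mul_le_mul hps hA ?_ zero_le_one
        exact Finset.sum_nonneg fun i hi => mul_nonneg (hp i hi) (sq_nonneg _)
    _ = α := one_mul α

/-- ℓ₂ approximate multicalibration and approximate calibration imply
the covariance notion of approximate multicalibration with parameter √α·(1+√B). -/
theorem stmt_16 [Fintype Ω] (μ : Ω → ℝ) (hμ : ∀ ω, 0 ≤ μ ω) (hμ1 : ∑ ω : Ω, μ ω = 1)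
    (Y f : Ω → ℝ) (hY : ∀ ω, Y ω = 0 ∨ Y ω = 1) (hf : ∀ ω, f ω ∈ Set.Icc (0 : ℝ) 1)
    (h : Ω → ℝ) (B α : ℝ) (hB : 0 ≤ B) (hα : 0 ≤ α)
    (hhB : ∀ ω, (h ω) ^ 2 ≤ B)
    (hmc : ∑ v ∈ Finset.image f Finset.univ,
        prEv μ {ω | f ω = v} *
          (cexp μ {ω | f ω = v} (fun ω => h ω * (Y ω - v))) ^ 2 ≤ α)
    (hcal : ∑ v ∈ Finset.image f Finset.univ,
        prEv μ {ω | f ω = v} *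
          (cexp μ {ω | f ω = v} (fun ω => Y ω - v)) ^ 2 ≤ α) :
    ∑ v ∈ Finset.image f Finset.univ,
        prEv μ {ω | f ω = v} *
          |cexp μ {ω | f ω = v} (fun ω =>
            (h ω - cexp μ {ω' | f ω' = v} h) *
              (Y ω - cexp μ {ω' | f ω' = v} Y))| ≤
      Real.sqrt α * (1 + Real.sqrt B) := by
  set s := Finset.image f Finset.univ with hs
  -- notation
  set p : ℝ → ℝ := fun v => prEv μ {ω | f ω = v} with hpdef
  have hp0 : ∀ v, 0 ≤ p v := by
    intro v
    exact Finset.sum_nonneg fun ω _ => by split <;> simp [hμ ω]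
  have hpsum : ∑ v ∈ s, p v = 1 := by
    rw [hpdef]
    simp only [prEv]
    rw [Finset.sum_comm]
    rw [← hμ1]
    refine Finset.sum_congr rfl fun ω _ => ?_
    simp only [Set.mem_setOf_eq]
    rw [Finset.sum_ite_eq s (f ω) (fun _ => μ ω)]
    simp [hs]
  have habs : ∀ ω, |h ω| ≤ Real.sqrt B := by
    intro ω
    rw [← Real.sqrt_sq_eq_abs]
    exact Real.sqrt_le_sqrt (hhB ω)
  set A : ℝ → ℝ := fun v => cexp μ {ω | f ω = v} (fun ω => h ω * (Y ω - v)) with hA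
  set C : ℝ → ℝ := fun v => cexp μ {ω | f ω = v} (fun ω => Y ω - v) with hC
  set D : ℝ → ℝ := fun v => cexp μ {ω | f ω = v} (fun ω =>
      (h ω - cexp μ {ω' | f ω' = v} h) * (Y ω - cexp μ {ω' | f ω' = v} Y)) with hD
  -- pointwise bound
  have key : ∀ v, p v * |D v| ≤ p v * |A v| + Real.sqrt B * (p v * |C v|) := by
    intro v
    by_cases hpv : p v = 0
    · rw [hpv]
      simp
    have hpvpos : 0 < p v := lt_of_le_of_ne (hp0 v) (Ne.symm hpv)
    -- sums
    set NhY : ℝ := ∑ ω : Ω, if ω ∈ {ω | f ω = v} then μ ω * (h ω * Y ω) else 0 with hNhY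
    set Nh : ℝ := ∑ ω : Ω, if ω ∈ {ω | f ω = v} then μ ω * h ω else 0 with hNh
    set NY : ℝ := ∑ ω : Ω, if ω ∈ {ω | f ω = v} then μ ω * Y ω else 0 with hNY
    have hcexph : cexp μ {ω' | f ω' = v} h = Nh / p v := rfl
    have hcexpY : cexp μ {ω' | f ω' = v} Y = NY / p v := rfl
    have hAe : A v = (NhY - v * Nh) / p v := by
      rw [hA]
      simp only [cexp]
      congr 1
      rw [hNhY, hNh, Finset.mul_sum, ← Finset.sum_sub_distrib]
      refine Finset.sum_congr rfl fun ω _ => ?_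
      split <;> ring
    have hCe : C v = (NY - v * p v) / p v := by
      rw [hC]
      simp only [cexp]
      congr 1
      rw [hNY, hpdef]
      simp only [prEv]
      rw [Finset.mul_sum, ← Finset.sum_sub_distrib]
      refine Finset.sum_congr rfl fun ω _ => ?_
      split <;> ring
    have hDe : D v = (NhY - (NY / p v) * Nh - (Nh / p v) * NY + (Nh / p v) * (NY / p v) * p v)
        / p v := by
      rw [hD]
      simp only [cexp, hcexph, hcexpY]
      congr 1
      rw [hNhY, hNh, hNY, hpdef]
      simp only [prEv]
      rw [Finset.mul_sum, Finset.mul_sum, Finset.mul_sum, ← Finset.sum_sub_distrib,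
        ← Finset.sum_sub_distrib, ← Finset.sum_add_distrib]
      refine Finset.sum_congr rfl fun ω _ => ?_
      split <;> ring
    have hiden : D v = A v - (Nh / p v) * C v := by
      rw [hDe, hAe, hCe]
      field_simp
      ring
    have hhbar : |Nh / p v| ≤ Real.sqrt B := by
      rw [abs_div, abs_of_pos hpvpos, div_le_iff₀ hpvpos]
      calc |Nh| ≤ ∑ ω : Ω, if ω ∈ {ω | f ω = v} then μ ω * Real.sqrt B else 0 := by
            refine (Finset.abs_sum_le_sum_abs _ _).trans ?_
            refine Finset.sum_le_sum fun ω _ => ?_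
            split
            · rw [abs_mul, abs_of_nonneg (hμ ω)]
              exact mul_le_mul_of_nonneg_left (habs ω) (hμ ω)
            · simp
        _ = Real.sqrt B * p v := by
            rw [hpdef]
            simp only [prEv]
            rw [Finset.mul_sum]
            refine Finset.sum_congr rfl fun ω _ => ?_
            split <;> ring
    calc p v * |D v| = p v * |A v - (Nh / p v) * C v| := by rw [hiden]
      _ ≤ p v * (|A v| + |Nh / p v| * |C v|) := by
          refine mul_le_mul_of_nonneg_left ?_ (hp0 v)
          refine (abs_sub _ _).trans ?_
          rw [abs_mul]
      _ ≤ p v * (|A v| + Real.sqrt B * |C v|) := by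
          refine mul_le_mul_of_nonneg_left ?_ (hp0 v)
          refine add_le_add (le_refl _) (mul_le_mul_of_nonneg_right hhbar (abs_nonneg _))
      _ = p v * |A v| + Real.sqrt B * (p v * |C v|) := by ring
  calc ∑ v ∈ s, p v * |D v|
      ≤ ∑ v ∈ s, (p v * |A v| + Real.sqrt B * (p v * |C v|)) :=
        Finset.sum_le_sum fun v _ => key v
    _ = (∑ v ∈ s, p v * |A v|) + Real.sqrt B * ∑ v ∈ s, p v * |C v| := by
        rw [Finset.sum_add_distrib, Finset.mul_sum]
    _ ≤ Real.sqrt α + Real.sqrt B * Real.sqrt α := by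
        have h1 : ∑ v ∈ s, p v * |A v| ≤ Real.sqrt α :=
          cs_aux s p A α hα (fun v _ => hp0 v) hpsum.le hmc
        have h2 : ∑ v ∈ s, p v * |C v| ≤ Real.sqrt α :=
          cs_aux s p C α hα (fun v _ => hp0 v) hpsum.le hcal
        exact add_le_add h1 (mul_le_mul_of_nonneg_left h2 (Real.sqrt_nonneg B))
    _ = Real.sqrt α * (1 + Real.sqrt B) := by ring
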